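/- Let λ, c > 0. Define u : ℝ³ × (0,∞) → ℝ on the open cone {(y,t) : ‖y‖ < ct, t > 0} by u(y,t) = (λ/(2c)) · (1/(π(e^{λt} − 1))) · Σ_{k=0}^∞ (λ/(2c))^{k+1} (c²t² − ‖y‖²)^{(k−1)/2} / (Γ((k+1)/2) · Γ((k+3)/2)). Then u satisfies the non-homogeneous telegraph equation with time-varying coefficients ∂²u/∂t² + c₁(t) ∂u/∂t − c² Δu = c₂(t) u + c₃(y,t) on the open cone, where Δ = Σ_{j=1}^3 ∂²/∂y_j², c₁(t) = 2λ e^{λt}/(e^{λt} − 1), c₂(t) = −λ²/(e^{λt} − 1), and c₃(y,t) = −λ² (c²t² − ‖y‖²)^{−3/2} / (2π²(e^{λt} − 1)). -/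

import Mathlib

open Real
noncomputable def DD (k : ℕ) : ℝ := Real.Gamma (((k:ℝ)+1)/2) * Real.Gamma (((k:ℝ)+3)/2)

lemma DD_pos (k : ℕ) : 0 < DD k := by
  unfold DD
  have h1 : (0:ℝ) < ((k:ℝ)+1)/2 := by positivity
  have h2 : (0:ℝ) < ((k:ℝ)+3)/2 := by positivity
  exact mul_pos (Real.Gamma_pos_of_pos h1) (Real.Gamma_pos_of_pos h2)

lemma DD_rec (k : ℕ) : DD (k+2) = (((k:ℝ)+1)/2) * (((k:ℝ)+3)/2) * DD k := by
  unfold DD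
  have e1 : ((((k:ℕ)+2:ℕ)):ℝ) = (k:ℝ)+2 := by push_cast; ring
  rw [e1]
  have h1 : ((k:ℝ)+2+1)/2 = ((k:ℝ)+1)/2 + 1 := by ring
  have h2 : ((k:ℝ)+2+3)/2 = ((k:ℝ)+3)/2 + 1 := by ring
  rw [h1, h2, Real.Gamma_add_one (by positivity), Real.Gamma_add_one (by positivity)]
  ring

lemma DD_zero : DD 0 = π/2 := by
  unfold DD
  have e1 : (((0:ℕ):ℝ)+1)/2 = 1/2 := by norm_num
  have e2 : (((0:ℕ):ℝ)+3)/2 = 1/2 + 1 := by norm_num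
  rw [e1, e2, Real.Gamma_add_one (by norm_num), Real.Gamma_one_half_eq]
  rw [show √π * (1/2 * √π) = (√π * √π) * (1/2) by ring, Real.mul_self_sqrt Real.pi_pos.le]
  ring

lemma DD_ge (k : ℕ) : (k.factorial : ℝ)/2^k ≤ DD k := by
  induction k using Nat.strong_induction_on with
  | _ k ih =>
    match k with
    | 0 => rw [DD_zero]; norm_num; linarith [Real.pi_gt_three]
    | 1 =>
      unfold DD
      have e1 : (((1:ℕ):ℝ)+1)/2 = 1 := by norm_num
      have e2 : (((1:ℕ):ℝ)+3)/2 = 1 + 1 := by norm_num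
      rw [e1, e2, Real.Gamma_add_one one_ne_zero, Real.Gamma_one]
      norm_num
    | (k+2) =>
      rw [DD_rec]
      have h := ih k (by omega)
      have hpos : (0:ℝ) < (((k:ℝ)+1)/2) * (((k:ℝ)+3)/2) := by positivity
      calc ((k+2).factorial : ℝ)/2^(k+2)
          = (((k:ℝ)+1)*((k:ℝ)+2)/4) * ((k.factorial : ℝ)/2^k) := by
            rw [show k+2 = (k+1)+1 from rfl, Nat.factorial_succ, Nat.factorial_succ]
            push_cast; ring
        _ ≤ (((k:ℝ)+1)/2 * (((k:ℝ)+3)/2)) * ((k.factorial : ℝ)/2^k) := by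
            apply mul_le_mul_of_nonneg_right _ (by positivity)
            have hk : (0:ℝ) ≤ (k:ℝ) := k.cast_nonneg
            nlinarith
        _ ≤ (((k:ℝ)+1)/2 * (((k:ℝ)+3)/2)) * DD k := by
            exact mul_le_mul_of_nonneg_left h hpos.le

lemma sq_le_pow4 (k : ℕ) : ((k:ℝ)+3)^2 ≤ 64 * 4^k := by
  have h : (k+3) < 2^(k+3) := Nat.lt_two_pow_self
  have h2 : ((k:ℝ)+3) ≤ 2^(k+3) := by
    have := (Nat.cast_le (α := ℝ)).2 h.le
    push_cast at this ⊢; linarith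
  have h3 : (0:ℝ) ≤ (k:ℝ)+3 := by positivity
  calc ((k:ℝ)+3)^2 ≤ ((2:ℝ)^(k+3))^2 := by nlinarith
    _ = 64 * 4^k := by rw [← pow_mul]; rw [show (k+3)*2 = 2*k + 6 by ring]
                       rw [pow_add, pow_mul]; norm_num; ring

lemma summable_D (q : ℝ) (hq : 0 ≤ q) :
    Summable (fun k : ℕ => ((k:ℝ)+3)^2 * q^k / DD k) := by
  refine Summable.of_nonneg_of_le (f := fun k : ℕ => 64 * ((8*q)^k / k.factorial))
    (fun k => by have := DD_pos k; positivity) (fun k => ?_)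
    ((Real.summable_pow_div_factorial (8*q)).mul_left 64)
  have hD := DD_ge k
  have hDpos := DD_pos k
  have hfac : (0:ℝ) < (k.factorial : ℝ) := by positivity
  show ((k:ℝ)+3)^2 * q^k / DD k ≤ 64 * ((8*q)^k / k.factorial)
  calc ((k:ℝ)+3)^2 * q^k / DD k
      ≤ ((k:ℝ)+3)^2 * q^k / ((k.factorial:ℝ)/2^k) :=
        div_le_div_of_nonneg_left (by positivity) (by positivity) hD
    _ = ((k:ℝ)+3)^2 * (2^k * q^k) / k.factorial := by
        field_simp
    _ ≤ (64 * 4^k) * (2^k * q^k) / k.factorial := by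
        gcongr
        exact sq_le_pow4 k
    _ = 64 * ((8*q)^k / k.factorial) := by
        rw [mul_pow, show (8:ℝ) = 4 * 2 by norm_num, mul_pow]
        ring

lemma summable_main (a x C e₀ : ℝ) (ha : 0 ≤ a) (hx : 0 < x) (v : ℕ → ℝ)
    (hv : ∀ k : ℕ, ‖v k‖ ≤ C * (((k:ℝ)+3)^2 * (a^(k+1) * x ^ ((k:ℝ)/2 + e₀)) / DD k)) :
    Summable v := by
  apply Summable.of_norm_bounded ?_ hv
  have heq : (fun k : ℕ => C * (((k:ℝ)+3)^2 * (a^(k+1) * x ^ ((k:ℝ)/2 + e₀)) / DD k))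
      = fun k : ℕ => (C * a * x ^ e₀) * (((k:ℝ)+3)^2 * (a * x ^ ((1:ℝ)/2))^k / DD k) := by
    funext k
    have hxk : x ^ ((k:ℝ)/2 + e₀) = (x ^ ((1:ℝ)/2))^k * x ^ e₀ := by
      rw [Real.rpow_add hx, ← Real.rpow_natCast (x ^ ((1:ℝ)/2)) k,
        ← Real.rpow_mul hx.le]
      rw [show (1:ℝ)/2 * (k:ℝ) = (k:ℝ)/2 by ring]
    rw [hxk, mul_pow]; ring
  rw [heq]
  exact ((summable_D _ (by positivity)).mul_left _)

lemma bound_helper {A p q zz ww : ℝ} (hA : 0 ≤ A) (hzz : 0 ≤ zz) (hp : |p| ≤ q)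
    (hzw : zz ≤ ww) : ‖A * (p * zz)‖ ≤ A * (q * ww) := by
  have hq : 0 ≤ q := le_trans (abs_nonneg p) hp
  rw [Real.norm_eq_abs, abs_mul, abs_mul, abs_of_nonneg hA, abs_of_nonneg hzz]
  exact mul_le_mul_of_nonneg_left (mul_le_mul hp hzw hzz hq) hA

noncomputable def gg (a x : ℝ) : ℝ := ∑' k : ℕ, a^(k+1) * x ^ (((k:ℝ)-1)/2) / DD k
noncomputable def gg1 (a x : ℝ) : ℝ :=
  ∑' k : ℕ, a^(k+1) * ((((k:ℝ)-1)/2) * x ^ (((k:ℝ)-1)/2 - 1)) / DD k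
noncomputable def gg2 (a x : ℝ) : ℝ :=
  ∑' k : ℕ, a^(k+1) * ((((k:ℝ)-1)/2) * ((((k:ℝ)-1)/2 - 1) * x ^ (((k:ℝ)-1)/2 - 1 - 1))) / DD k

lemma summable_shape (a x : ℝ) (ha : 0 ≤ a) (hx : 0 < x) (P : ℕ → ℝ) (e₀ : ℝ)
    (hP : ∀ k : ℕ, |P k| ≤ ((k:ℝ)+3)^2) :
    Summable (fun k : ℕ => a^(k+1) * (P k * x ^ ((k:ℝ)/2 + e₀)) / DD k) := by
  apply summable_main a x 1 e₀ ha hx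
  intro k
  have hDpos := DD_pos k
  have hxe : (0:ℝ) ≤ x ^ ((k:ℝ)/2 + e₀) := Real.rpow_nonneg hx.le _
  rw [show a^(k+1) * (P k * x ^ ((k:ℝ)/2 + e₀)) / DD k
      = (a^(k+1)/DD k) * (P k * x ^ ((k:ℝ)/2 + e₀)) by ring]
  calc ‖(a^(k+1)/DD k) * (P k * x ^ ((k:ℝ)/2+e₀))‖
      ≤ (a^(k+1)/DD k) * (((k:ℝ)+3)^2 * x ^ ((k:ℝ)/2+e₀)) :=
        bound_helper (div_nonneg (pow_nonneg ha _) hDpos.le) hxe (hP k) le_rfl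
    _ = 1 * (((k:ℝ)+3)^2 * (a^(k+1) * x ^ ((k:ℝ)/2+e₀)) / DD k) := by ring

lemma abs_bound1 (k : ℕ) : |((k:ℝ)-1)/2| ≤ ((k:ℝ)+3)^2 := by
  have h : (0:ℝ) ≤ (k:ℝ) := k.cast_nonneg
  rw [abs_le]; constructor <;> nlinarith

lemma abs_bound2 (k : ℕ) : |(((k:ℝ)-1)/2) * (((k:ℝ)-1)/2 - 1)| ≤ ((k:ℝ)+3)^2 := by
  have h : (0:ℝ) ≤ (k:ℝ) := k.cast_nonneg
  rw [abs_mul]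
  have h1 : |((k:ℝ)-1)/2| ≤ (k:ℝ)+3 := by rw [abs_le]; constructor <;> linarith
  have h2 : |((k:ℝ)-1)/2 - 1| ≤ (k:ℝ)+3 := by rw [abs_le]; constructor <;> linarith
  calc |((k:ℝ)-1)/2| * |((k:ℝ)-1)/2 - 1| ≤ ((k:ℝ)+3) * ((k:ℝ)+3) :=
        mul_le_mul h1 h2 (abs_nonneg _) (by linarith)
    _ = ((k:ℝ)+3)^2 := by ring

lemma summable_gg (a x : ℝ) (ha : 0 ≤ a) (hx : 0 < x) :
    Summable (fun k : ℕ => a^(k+1) * x ^ (((k:ℝ)-1)/2) / DD k) := by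
  have := summable_shape a x ha hx (fun _ => 1) (-(1:ℝ)/2) (fun k => by
    rw [abs_one]; nlinarith [(Nat.cast_nonneg k : (0:ℝ) ≤ k)])
  apply this.congr
  intro k
  rw [show (k:ℝ)/2 + (-(1:ℝ)/2) = ((k:ℝ)-1)/2 by ring]
  ring

lemma summable_gg1 (a x : ℝ) (ha : 0 ≤ a) (hx : 0 < x) :
    Summable (fun k : ℕ => a^(k+1) * ((((k:ℝ)-1)/2) * x ^ (((k:ℝ)-1)/2 - 1)) / DD k) := by
  have := summable_shape a x ha hx (fun k => ((k:ℝ)-1)/2) (-(3:ℝ)/2) abs_bound1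
  apply this.congr
  intro k
  rw [show (k:ℝ)/2 + (-(3:ℝ)/2) = ((k:ℝ)-1)/2 - 1 by ring]

lemma summable_gg2 (a x : ℝ) (ha : 0 ≤ a) (hx : 0 < x) :
    Summable (fun k : ℕ => a^(k+1) *
      ((((k:ℝ)-1)/2) * ((((k:ℝ)-1)/2 - 1) * x ^ (((k:ℝ)-1)/2 - 1 - 1))) / DD k) := by
  have := summable_shape a x ha hx (fun k => (((k:ℝ)-1)/2) * (((k:ℝ)-1)/2 - 1))
    (-(5:ℝ)/2) abs_bound2
  apply this.congr
  intro k
  rw [show (k:ℝ)/2 + (-(5:ℝ)/2) = ((k:ℝ)-1)/2 - 1 - 1 by ring]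
  ring

lemma gg_hasDerivAt (a : ℝ) (ha : 0 ≤ a) {x : ℝ} (hx : 0 < x) :
    HasDerivAt (gg a) (gg1 a x) x := by
  have hd : 0 < x/2 := half_pos hx
  have hM : 0 < x + 1 := by linarith
  have key := hasDerivAt_tsum_of_isPreconnected
    (u := fun k : ℕ => (a^(k+1)/DD k) *
      (((k:ℝ)+3)^2 * ((x+1) ^ ((k:ℝ)/2) * (x/2) ^ (-(3:ℝ)/2))))
    (g := fun (k : ℕ) (z : ℝ) => a^(k+1) * z ^ (((k:ℝ)-1)/2) / DD k)
    (g' := fun (k : ℕ) (z : ℝ) => a^(k+1) * ((((k:ℝ)-1)/2) * z ^ (((k:ℝ)-1)/2 - 1)) / DD k)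
    (t := Set.Ioo (x/2) (x+1)) (y₀ := x) (y := x)
    ?_ isOpen_Ioo (isPreconnected_Ioo) ?_ ?_ ?_ ?_ ?_
  · exact key
  · -- Summable u
    apply summable_main a (x+1) ((x/2) ^ (-(3:ℝ)/2)) 0 ha hM
    intro k
    have hDpos := DD_pos k
    have h1 : (0:ℝ) ≤ (x+1) ^ ((k:ℝ)/2) := Real.rpow_nonneg hM.le _
    have h2 : (0:ℝ) ≤ (x/2) ^ (-(3:ℝ)/2) := Real.rpow_nonneg hd.le _
    rw [Real.norm_eq_abs, abs_of_nonneg (by positivity), add_zero]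
    apply le_of_eq; ring
  · -- HasDerivAt for each term
    intro k z hz
    have hz0 : 0 < z := lt_trans hd hz.1
    exact ((Real.hasDerivAt_rpow_const (p := ((k:ℝ)-1)/2)
      (Or.inl hz0.ne')).const_mul (a^(k+1))).div_const (DD k)
  · -- bound
    intro k z hz
    have hz0 : 0 < z := lt_trans hd hz.1
    have hDpos := DD_pos k
    rw [show ((k:ℝ)-1)/2 - 1 = (k:ℝ)/2 + (-(3:ℝ)/2) by ring, Real.rpow_add hz0]
    rw [show a^(k+1) * ((((k:ℝ)-1)/2) * (z ^ ((k:ℝ)/2) * z ^ (-(3:ℝ)/2))) / DD k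
        = (a^(k+1)/DD k) * ((((k:ℝ)-1)/2) * (z ^ ((k:ℝ)/2) * z ^ (-(3:ℝ)/2))) by ring]
    apply bound_helper (div_nonneg (pow_nonneg ha _) hDpos.le)
      (mul_nonneg (Real.rpow_nonneg hz0.le _) (Real.rpow_nonneg hz0.le _))
      (abs_bound1 k)
    exact mul_le_mul (Real.rpow_le_rpow hz0.le hz.2.le (by positivity))
      (Real.rpow_le_rpow_of_nonpos hd hz.1.le (by norm_num))
      (Real.rpow_nonneg hz0.le _) (Real.rpow_nonneg hM.le _)
  · exact ⟨by linarith, by linarith⟩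
  · exact summable_gg a x ha hx
  · exact ⟨by linarith, by linarith⟩

lemma gg1_hasDerivAt (a : ℝ) (ha : 0 ≤ a) {x : ℝ} (hx : 0 < x) :
    HasDerivAt (gg1 a) (gg2 a x) x := by
  have hd : 0 < x/2 := half_pos hx
  have hM : 0 < x + 1 := by linarith
  have key := hasDerivAt_tsum_of_isPreconnected
    (u := fun k : ℕ => (a^(k+1)/DD k) *
      (((k:ℝ)+3)^2 * ((x+1) ^ ((k:ℝ)/2) * (x/2) ^ (-(5:ℝ)/2))))
    (g := fun (k : ℕ) (z : ℝ) => a^(k+1) * ((((k:ℝ)-1)/2) * z ^ (((k:ℝ)-1)/2 - 1)) / DD k)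
    (g' := fun (k : ℕ) (z : ℝ) => a^(k+1) *
      ((((k:ℝ)-1)/2) * ((((k:ℝ)-1)/2 - 1) * z ^ (((k:ℝ)-1)/2 - 1 - 1))) / DD k)
    (t := Set.Ioo (x/2) (x+1)) (y₀ := x) (y := x)
    ?_ isOpen_Ioo (isPreconnected_Ioo) ?_ ?_ ?_ ?_ ?_
  · exact key
  · apply summable_main a (x+1) ((x/2) ^ (-(5:ℝ)/2)) 0 ha hM
    intro k
    have hDpos := DD_pos k
    have h1 : (0:ℝ) ≤ (x+1) ^ ((k:ℝ)/2) := Real.rpow_nonneg hM.le _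
    have h2 : (0:ℝ) ≤ (x/2) ^ (-(5:ℝ)/2) := Real.rpow_nonneg hd.le _
    rw [Real.norm_eq_abs, abs_of_nonneg (by positivity), add_zero]
    apply le_of_eq; ring
  · intro k z hz
    have hz0 : 0 < z := lt_trans hd hz.1
    exact (((Real.hasDerivAt_rpow_const (p := ((k:ℝ)-1)/2 - 1)
      (Or.inl hz0.ne')).const_mul (((k:ℝ)-1)/2)).const_mul (a^(k+1))).div_const (DD k)
  · intro k z hz
    have hz0 : 0 < z := lt_trans hd hz.1
    have hDpos := DD_pos k
    rw [show ((k:ℝ)-1)/2 - 1 - 1 = (k:ℝ)/2 + (-(5:ℝ)/2) by ring, Real.rpow_add hz0]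
    rw [show a^(k+1) * ((((k:ℝ)-1)/2) * ((((k:ℝ)-1)/2 - 1) *
          (z ^ ((k:ℝ)/2) * z ^ (-(5:ℝ)/2)))) / DD k
        = (a^(k+1)/DD k) * (((((k:ℝ)-1)/2) * (((k:ℝ)-1)/2 - 1)) *
          (z ^ ((k:ℝ)/2) * z ^ (-(5:ℝ)/2))) by ring]
    apply bound_helper (div_nonneg (pow_nonneg ha _) hDpos.le)
      (mul_nonneg (Real.rpow_nonneg hz0.le _) (Real.rpow_nonneg hz0.le _))
      (abs_bound2 k)
    exact mul_le_mul (Real.rpow_le_rpow hz0.le hz.2.le (by positivity))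
      (Real.rpow_le_rpow_of_nonpos hd hz.1.le (by norm_num))
      (Real.rpow_nonneg hz0.le _) (Real.rpow_nonneg hM.le _)
  · exact ⟨by linarith, by linarith⟩
  · exact summable_gg1 a x ha hx
  · exact ⟨by linarith, by linarith⟩

lemma master (lam c : ℝ) (hlam : 0 < lam) (hc : 0 < c) {x : ℝ} (hx : 0 < x) :
    4*c^2*x * gg2 (lam/(2*c)) x + 8*c^2 * gg1 (lam/(2*c)) x
      = lam^2 * gg (lam/(2*c)) x - (lam*c/π) * x ^ (-(3:ℝ)/2) := by
  set a := lam/(2*c) with ha_def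
  have ha : 0 ≤ a := by positivity
  have s2 := summable_gg2 a x ha hx
  have s1 := summable_gg1 a x ha hx
  have s0 := summable_gg a x ha hx
  set G : ℕ → ℝ := fun k =>
    c^2*((k:ℝ)^2-1) * (a^(k+1) * x ^ (((k:ℝ)-1)/2 - 1) / DD k) with hG_def
  have key : ∀ k : ℕ,
      4*c^2*x * (a^(k+1) * ((((k:ℝ)-1)/2) * ((((k:ℝ)-1)/2 - 1) *
          x ^ (((k:ℝ)-1)/2 - 1 - 1))) / DD k)
        + 8*c^2 * (a^(k+1) * ((((k:ℝ)-1)/2) * x ^ (((k:ℝ)-1)/2 - 1)) / DD k)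
      = G k := by
    intro k
    have e1 : x ^ (((k:ℝ)-1)/2 - 1) = x ^ (((k:ℝ)-1)/2 - 1 - 1) * x := by
      rw [← Real.rpow_add_one hx.ne']; congr 1; ring
    rw [hG_def]
    simp only []
    rw [e1]
    ring
  have hG : Summable G := ((s2.mul_left (4*c^2*x)).add (s1.mul_left (8*c^2))).congr key
  have step1 : 4*c^2*x * gg2 a x + 8*c^2 * gg1 a x = ∑' k, G k := by
    rw [gg2, gg1, ← tsum_mul_left, ← tsum_mul_left,
      ← Summable.tsum_add (s2.mul_left (4*c^2*x)) (s1.mul_left (8*c^2))]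
    exact tsum_congr key
  have hG1 : Summable (fun k => G (k+1)) := (summable_nat_add_iff 1).2 hG
  have step2 : ∑' k, G k = G 0 + (G 1 + ∑' k, G (k+2)) := by
    rw [hG.tsum_eq_zero_add, hG1.tsum_eq_zero_add]
  have hG1val : G 1 = 0 := by
    rw [hG_def]; norm_num
  have hG0val : G 0 = -(lam*c/π) * x ^ (-(3:ℝ)/2) := by
    rw [hG_def]
    simp only []
    rw [show (((0:ℕ):ℝ)-1)/2 - 1 = -(3:ℝ)/2 by norm_num, DD_zero]
    rw [ha_def]
    have hπ := Real.pi_ne_zero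
    have hc0 : c ≠ 0 := hc.ne'
    field_simp
    ring_nf
    field_simp
  have hshift : ∀ k : ℕ, G (k+2) = lam^2 * (a^(k+1) * x ^ (((k:ℝ)-1)/2) / DD k) := by
    intro k
    rw [hG_def]
    simp only []
    rw [DD_rec]
    have ec : (((k+2:ℕ)):ℝ) = (k:ℝ)+2 := by push_cast; ring
    rw [ec]
    rw [show (((k:ℝ)+2)-1)/2 - 1 = ((k:ℝ)-1)/2 by ring]
    have hk1 : ((k:ℝ)+1) ≠ 0 := by positivity
    have hk3 : ((k:ℝ)+3) ≠ 0 := by positivity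
    have hD : DD k ≠ 0 := (DD_pos k).ne'
    have hc0 : c ≠ 0 := hc.ne'
    rw [ha_def]
    simp only [div_pow]
    field_simp
    ring
  have step3 : ∑' k, G (k+2) = lam^2 * gg a x := by
    rw [tsum_congr hshift, tsum_mul_left, gg]
  rw [step1, step2, hG1val, hG0val, step3]
  ring

lemma one_lt_expp {lam s : ℝ} (hlam : 0 < lam) (hs : 0 < s) : 1 < Real.exp (lam*s) := by
  rw [show (1:ℝ) = Real.exp 0 by simp]
  exact Real.exp_lt_exp.2 (by positivity)

lemma exp_hasDeriv (lam : ℝ) (s : ℝ) :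
    HasDerivAt (fun z => Real.exp (lam*z)) (lam * Real.exp (lam*s)) s := by
  have h := HasDerivAt.exp ((hasDerivAt_id s).const_mul lam)
  simp only [id_eq, mul_one] at h
  convert h using 1
  ring

lemma BB_hasDeriv (lam c : ℝ) (hlam : 0 < lam) (hc : 0 < c) {s : ℝ} (hs : 0 < s) :
    HasDerivAt (fun z => lam/(2*c) * (1/(π * (Real.exp (lam*z) - 1))))
      (-(lam/(2*c)) * lam * Real.exp (lam*s) / (π * (Real.exp (lam*s)-1)^2)) s := by
  have hE := one_lt_expp hlam hs
  have hne : π * (Real.exp (lam*s) - 1) ≠ 0 :=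
    mul_ne_zero Real.pi_ne_zero (by linarith)
  have hden : HasDerivAt (fun z => π * (Real.exp (lam*z) - 1))
      (π * (lam * Real.exp (lam*s))) s := ((exp_hasDeriv lam s).sub_const 1).const_mul π
  have h := ((hasDerivAt_const s (1:ℝ)).div hden hne).const_mul (lam/(2*c))
  refine h.congr_deriv ?_
  have h2 : Real.exp (lam*s) - 1 ≠ 0 := by linarith
  field_simp
  ring

lemma BB1_hasDeriv (lam c : ℝ) (hlam : 0 < lam) (hc : 0 < c) {s : ℝ} (hs : 0 < s) :
    HasDerivAt (fun z => -(lam/(2*c)) * lam * Real.exp (lam*z) / (π * (Real.exp (lam*z)-1)^2))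
      (-(lam/(2*c)) * lam^2 * Real.exp (lam*s) / (π * (Real.exp (lam*s)-1)^2)
        + 2*(lam/(2*c))*lam^2 * Real.exp (lam*s)^2 / (π * (Real.exp (lam*s)-1)^3)) s := by
  have hE := one_lt_expp hlam hs
  have hne : π * (Real.exp (lam*s) - 1)^2 ≠ 0 :=
    mul_ne_zero Real.pi_ne_zero (pow_ne_zero 2 (by linarith))
  have hnum : HasDerivAt (fun z => -(lam/(2*c)) * lam * Real.exp (lam*z))
      (-(lam/(2*c)) * lam * (lam * Real.exp (lam*s))) s :=
    (exp_hasDeriv lam s).const_mul (-(lam/(2*c)) * lam)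
  have hden : HasDerivAt (fun z => π * (Real.exp (lam*z)-1)^2)
      (π * (2 * (Real.exp (lam*s)-1)^1 * (lam * Real.exp (lam*s)))) s :=
    (((exp_hasDeriv lam s).sub_const 1).pow 2).const_mul π
  have h := hnum.div hden hne
  refine h.congr_deriv ?_
  have hE1 : Real.exp (lam*s) - 1 ≠ 0 := by linarith
  field_simp
  ring

lemma comp_hasDerivAt (a : ℝ) (ha : 0 ≤ a) {W : ℝ → ℝ} {W' s : ℝ}
    (hW : HasDerivAt W W' s) (hpos : 0 < W s) :
    HasDerivAt (fun z => gg a (W z)) (gg1 a (W s) * W') s := by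
  have h := (gg_hasDerivAt a ha hpos).comp s hW
  exact h

lemma comp1_hasDerivAt (a : ℝ) (ha : 0 ≤ a) {W : ℝ → ℝ} {W' s : ℝ}
    (hW : HasDerivAt W W' s) (hpos : 0 < W s) :
    HasDerivAt (fun z => gg1 a (W z)) (gg2 a (W s) * W') s := by
  have h := (gg1_hasDerivAt a ha hpos).comp s hW
  exact h

lemma norm_sq_sum (y : EuclideanSpace ℝ (Fin 3)) : ‖y‖^2 = ∑ i, (y i)^2 := by
  rw [EuclideanSpace.norm_eq, Real.sq_sqrt (by positivity)]
  congr 1; funext i; rw [Real.norm_eq_abs, sq_abs]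

lemma update_norm_sq (y : EuclideanSpace ℝ (Fin 3)) (j : Fin 3) (s : ℝ)
    (z : EuclideanSpace ℝ (Fin 3)) (hz : z = WithLp.toLp 2 (Function.update y j s)) :
    ‖z‖^2 = ‖y‖^2 - (y j)^2 + s^2 := by
  rw [norm_sq_sum z, norm_sq_sum y]
  have h1 : (fun i => (z i)^2) = Function.update (fun i => (y i)^2) j (s^2) := by
    funext i
    rcases eq_or_ne i j with rfl | hij
    · simp [hz]
    · simp [hz, Function.update_apply, hij]
  calc ∑ i, (z i)^2
      = ∑ i, Function.update (fun i => (y i)^2) j (s^2) i := by rw [h1]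
    _ = s^2 + ∑ i ∈ Finset.univ.erase j, (y i)^2 := by
        rw [Finset.sum_update_of_mem (Finset.mem_univ j), Finset.sdiff_singleton_eq_erase]
    _ = ∑ i, (y i)^2 - (y j)^2 + s^2 := by
        have := Finset.add_sum_erase Finset.univ (fun i => (y i)^2) (Finset.mem_univ j)
        simp only [] at this
        linarith

lemma iteratedDeriv_two (f : ℝ → ℝ) (x : ℝ) :
    iteratedDeriv 2 f x = deriv (deriv f) x := by
  rw [show (2:ℕ) = 1+1 from rfl, iteratedDeriv_succ, iteratedDeriv_one]

set_option maxHeartbeats 1600000 in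
/-- the absolutely continuous density of the random flight `Y₃(t)`,
`u(y,t) = (λ/(2c)) (1/(π(e^{λt}-1))) Σ_{k=0}^∞ (λ/(2c))^{k+1}
            (c²t² - ‖y‖²)^{(k-1)/2} / (Γ((k+1)/2) Γ((k+3)/2))`,
satisfies the non-homogeneous telegraph equation with time-varying coefficients
`∂²u/∂t² + c₁(t) ∂u/∂t - c² Δu = c₂(t) u + c₃(y,t)` on the open cone
`{(y,t) : ‖y‖ < ct, t > 0}`, where `c₁(t) = 2λe^{λt}/(e^{λt}-1)`,
`c₂(t) = -λ²/(e^{λt}-1)` and `c₃(y,t) = -λ²(c²t²-‖y‖²)^{-3/2}/(2π²(e^{λt}-1))`. -/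
theorem statement2 (lam c : ℝ) (hlam : 0 < lam) (hc : 0 < c)
    (u : EuclideanSpace ℝ (Fin 3) × ℝ → ℝ)
    (hu : ∀ (y : EuclideanSpace ℝ (Fin 3)) (t : ℝ), u (y, t) =
      lam / (2 * c) * (1 / (π * (Real.exp (lam * t) - 1))) *
        ∑' k : ℕ,
          (lam / (2 * c)) ^ (k + 1) *
            (c ^ 2 * t ^ 2 - ‖y‖ ^ 2) ^ (((k : ℝ) - 1) / 2) /
            (Real.Gamma (((k : ℝ) + 1) / 2) * Real.Gamma (((k : ℝ) + 3) / 2))) :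
    ∀ (y : EuclideanSpace ℝ (Fin 3)) (t : ℝ), 0 < t → ‖y‖ < c * t →
      iteratedDeriv 2 (fun s => u (y, s)) t
        + (2 * lam * Real.exp (lam * t) / (Real.exp (lam * t) - 1)) *
            deriv (fun s => u (y, s)) t
        - c ^ 2 * ∑ j : Fin 3,
            iteratedDeriv 2 (fun s => u (WithLp.toLp 2 (Function.update y j s), t)) (y j)
      = (-(lam ^ 2) / (Real.exp (lam * t) - 1)) * u (y, t)
          + (-(lam ^ 2) * (c ^ 2 * t ^ 2 - ‖y‖ ^ 2) ^ (-(3 : ℝ) / 2) /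
              (2 * π ^ 2 * (Real.exp (lam * t) - 1))) := by
  intro y t ht hyt
  have ha : 0 ≤ lam/(2*c) := by positivity
  have hw : 0 < c^2*t^2 - ‖y‖^2 := by nlinarith [norm_nonneg y]
  have hE : 1 < Real.exp (lam*t) := one_lt_expp hlam ht
  have hE1 : Real.exp (lam*t) - 1 ≠ 0 := by linarith
  -- the time-section of u
  have hfeq : (fun s => u (y, s)) = (fun s => lam/(2*c) * (1/(π * (Real.exp (lam*s) - 1))) *
      gg (lam/(2*c)) (c^2*s^2 - ‖y‖^2)) := by
    funext s; rw [hu y s]; rfl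
  have hW : ∀ s : ℝ, HasDerivAt (fun z => c^2*z^2 - ‖y‖^2) (2*c^2*s) s := by
    intro s
    have h := ((hasDerivAt_pow 2 s).const_mul (c^2)).sub_const (‖y‖^2)
    refine h.congr_deriv ?_
    norm_num; ring
  have hderiv1 : ∀ s : ℝ, 0 < s → 0 < c^2*s^2 - ‖y‖^2 →
      HasDerivAt (fun s' => lam/(2*c) * (1/(π * (Real.exp (lam*s') - 1))) *
          gg (lam/(2*c)) (c^2*s'^2 - ‖y‖^2))
        ((-(lam/(2*c)) * lam * Real.exp (lam*s) / (π * (Real.exp (lam*s)-1)^2)) *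
            gg (lam/(2*c)) (c^2*s^2 - ‖y‖^2)
          + (lam/(2*c) * (1/(π * (Real.exp (lam*s) - 1)))) *
            (gg1 (lam/(2*c)) (c^2*s^2 - ‖y‖^2) * (2*c^2*s))) s := by
    intro s hs hpos
    exact (BB_hasDeriv lam c hlam hc hs).mul (comp_hasDerivAt _ ha (hW s) hpos)
  have hVopen : IsOpen {s : ℝ | 0 < s ∧ 0 < c^2*s^2 - ‖y‖^2} :=
    IsOpen.and (isOpen_lt continuous_const continuous_id)
      (isOpen_lt continuous_const
        ((continuous_const.mul (continuous_pow 2)).sub continuous_const))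
  have hev : (deriv (fun s => lam/(2*c) * (1/(π * (Real.exp (lam*s) - 1))) *
      gg (lam/(2*c)) (c^2*s^2 - ‖y‖^2))) =ᶠ[nhds t]
      (fun s => (-(lam/(2*c)) * lam * Real.exp (lam*s) / (π * (Real.exp (lam*s)-1)^2)) *
            gg (lam/(2*c)) (c^2*s^2 - ‖y‖^2)
          + (lam/(2*c) * (1/(π * (Real.exp (lam*s) - 1)))) *
            (gg1 (lam/(2*c)) (c^2*s^2 - ‖y‖^2) * (2*c^2*s))) := by
    apply Filter.eventually_of_mem (hVopen.mem_nhds (by exact ⟨ht, hw⟩))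
    intro s hs
    exact (hderiv1 s hs.1 hs.2).deriv
  have h2cs : HasDerivAt (fun s : ℝ => 2*c^2*s) (2*c^2) t := by
    have h := (hasDerivAt_id t).const_mul (2*c^2)
    refine h.congr_deriv ?_
    ring
  have hF1' : HasDerivAt (fun s =>
        (-(lam/(2*c)) * lam * Real.exp (lam*s) / (π * (Real.exp (lam*s)-1)^2)) *
            gg (lam/(2*c)) (c^2*s^2 - ‖y‖^2)
          + (lam/(2*c) * (1/(π * (Real.exp (lam*s) - 1)))) *
            (gg1 (lam/(2*c)) (c^2*s^2 - ‖y‖^2) * (2*c^2*s)))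
      (((-(lam/(2*c)) * lam^2 * Real.exp (lam*t) / (π * (Real.exp (lam*t)-1)^2)
          + 2*(lam/(2*c))*lam^2 * Real.exp (lam*t)^2 / (π * (Real.exp (lam*t)-1)^3)) *
            gg (lam/(2*c)) (c^2*t^2 - ‖y‖^2)
        + (-(lam/(2*c)) * lam * Real.exp (lam*t) / (π * (Real.exp (lam*t)-1)^2)) *
            (gg1 (lam/(2*c)) (c^2*t^2 - ‖y‖^2) * (2*c^2*t)))
      + ((-(lam/(2*c)) * lam * Real.exp (lam*t) / (π * (Real.exp (lam*t)-1)^2)) *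
            (gg1 (lam/(2*c)) (c^2*t^2 - ‖y‖^2) * (2*c^2*t))
        + (lam/(2*c) * (1/(π * (Real.exp (lam*t) - 1)))) *
            (gg2 (lam/(2*c)) (c^2*t^2 - ‖y‖^2) * (2*c^2*t) * (2*c^2*t)
              + gg1 (lam/(2*c)) (c^2*t^2 - ‖y‖^2) * (2*c^2)))) t := by
    exact ((BB1_hasDeriv lam c hlam hc ht).mul (comp_hasDerivAt _ ha (hW t) hw)).add
      ((BB_hasDeriv lam c hlam hc ht).mul
        ((comp1_hasDerivAt _ ha (hW t) hw).mul h2cs))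
  have h2nd : iteratedDeriv 2 (fun s => u (y, s)) t =
      (-(lam/(2*c)) * lam^2 * Real.exp (lam*t) / (π * (Real.exp (lam*t)-1)^2)
          + 2*(lam/(2*c))*lam^2 * Real.exp (lam*t)^2 / (π * (Real.exp (lam*t)-1)^3)) *
        gg (lam/(2*c)) (c^2*t^2 - ‖y‖^2)
      + 2 * (-(lam/(2*c)) * lam * Real.exp (lam*t) / (π * (Real.exp (lam*t)-1)^2)) *
          (2*c^2*t) * gg1 (lam/(2*c)) (c^2*t^2 - ‖y‖^2)
      + (lam/(2*c) * (1/(π * (Real.exp (lam*t) - 1)))) *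
          (4*c^4*t^2 * gg2 (lam/(2*c)) (c^2*t^2 - ‖y‖^2)
            + 2*c^2 * gg1 (lam/(2*c)) (c^2*t^2 - ‖y‖^2)) := by
    rw [hfeq, iteratedDeriv_two, Filter.EventuallyEq.deriv_eq hev, hF1'.deriv]
    ring
  have hdd : deriv (fun s => u (y, s)) t =
      (-(lam/(2*c)) * lam * Real.exp (lam*t) / (π * (Real.exp (lam*t)-1)^2)) *
          gg (lam/(2*c)) (c^2*t^2 - ‖y‖^2)
        + (lam/(2*c) * (1/(π * (Real.exp (lam*t) - 1)))) *
          (gg1 (lam/(2*c)) (c^2*t^2 - ‖y‖^2) * (2*c^2*t)) := by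
    rw [hfeq]; exact (hderiv1 t ht hw).deriv
  -- spatial second derivatives
  have hspace : ∀ j : Fin 3, iteratedDeriv 2 (fun s => u (WithLp.toLp 2 (Function.update y j s), t)) (y j)
      = (lam/(2*c) * (1/(π * (Real.exp (lam*t) - 1)))) *
          (4*(y j)^2 * gg2 (lam/(2*c)) (c^2*t^2 - ‖y‖^2)
            - 2 * gg1 (lam/(2*c)) (c^2*t^2 - ‖y‖^2)) := by
    intro j
    have hgeq : (fun s => u (WithLp.toLp 2 (Function.update y j s), t)) =
        (fun s => lam/(2*c) * (1/(π * (Real.exp (lam*t) - 1))) *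
          gg (lam/(2*c)) (c^2*t^2 - (‖y‖^2 - (y j)^2 + s^2))) := by
      funext s
      rw [hu (WithLp.toLp 2 (Function.update y j s)) t]
      simp only [update_norm_sq y j s (WithLp.toLp 2 (Function.update y j s)) rfl]
      rfl
    have hWj : ∀ s : ℝ, HasDerivAt (fun z => c^2*t^2 - (‖y‖^2 - (y j)^2 + z^2)) (-(2*s)) s := by
      intro s
      have h := ((hasDerivAt_pow 2 s).const_add (‖y‖^2 - (y j)^2)).const_sub (c^2*t^2)
      refine h.congr_deriv ?_
      norm_num
    have hVjopen : IsOpen {s : ℝ | 0 < c^2*t^2 - (‖y‖^2 - (y j)^2 + s^2)} :=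
      isOpen_lt continuous_const
        (continuous_const.sub (continuous_const.add (continuous_pow 2)))
    have hyj : 0 < c^2*t^2 - (‖y‖^2 - (y j)^2 + (y j)^2) := by linarith [hw]
    have hderj : ∀ s : ℝ, 0 < c^2*t^2 - (‖y‖^2 - (y j)^2 + s^2) →
        HasDerivAt (fun s' => lam/(2*c) * (1/(π * (Real.exp (lam*t) - 1))) *
            gg (lam/(2*c)) (c^2*t^2 - (‖y‖^2 - (y j)^2 + s'^2)))
          ((lam/(2*c) * (1/(π * (Real.exp (lam*t) - 1)))) *
            (gg1 (lam/(2*c)) (c^2*t^2 - (‖y‖^2 - (y j)^2 + s^2)) * (-(2*s)))) s :=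
      fun s hs => (comp_hasDerivAt _ ha (hWj s) hs).const_mul _
    have hevj : (deriv (fun s => lam/(2*c) * (1/(π * (Real.exp (lam*t) - 1))) *
        gg (lam/(2*c)) (c^2*t^2 - (‖y‖^2 - (y j)^2 + s^2)))) =ᶠ[nhds (y j)]
        (fun s => (lam/(2*c) * (1/(π * (Real.exp (lam*t) - 1)))) *
          (gg1 (lam/(2*c)) (c^2*t^2 - (‖y‖^2 - (y j)^2 + s^2)) * (-(2*s)))) := by
      apply Filter.eventually_of_mem (hVjopen.mem_nhds (by exact hyj))
      intro s hs
      exact (hderj s hs).deriv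
    have hng : HasDerivAt (fun s : ℝ => -(2*s)) (-2) (y j) := by
      have h := ((hasDerivAt_id (y j)).const_mul 2).neg
      refine h.congr_deriv ?_
      ring
    have hder2j := ((comp1_hasDerivAt _ ha (hWj (y j)) hyj).mul hng).const_mul
      (lam/(2*c) * (1/(π * (Real.exp (lam*t) - 1))))
    simp only [Pi.mul_apply] at hder2j
    rw [hgeq, iteratedDeriv_two, Filter.EventuallyEq.deriv_eq hevj, hder2j.deriv,
      show c^2*t^2 - (‖y‖^2 - (y j)^2 + (y j)^2) = c^2*t^2 - ‖y‖^2 by ring]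
    ring
  have huyt : u (y, t) = lam/(2*c) * (1/(π * (Real.exp (lam*t) - 1))) *
      gg (lam/(2*c)) (c^2*t^2 - ‖y‖^2) := by
    rw [hu y t]; rfl
  have hr2 : ‖y‖^2 = (y 0)^2 + (y 1)^2 + (y 2)^2 := by
    rw [norm_sq_sum y, Fin.sum_univ_three]
  have hmaster := master lam c hlam hc hw
  rw [h2nd, hdd, Fin.sum_univ_three, hspace 0, hspace 1, hspace 2, huyt]
  set X := gg (lam/(2*c)) (c^2*t^2 - ‖y‖^2) with hX
  set X1 := gg1 (lam/(2*c)) (c^2*t^2 - ‖y‖^2) with hX1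
  set X2 := gg2 (lam/(2*c)) (c^2*t^2 - ‖y‖^2) with hX2v
  set Z := (c^2*t^2 - ‖y‖^2) ^ (-(3:ℝ)/2) with hZ
  have hX2eq : X2 = (lam^2*X - lam*c/π*Z - 8*c^2*X1) / (4*c^2*(c^2*t^2 - ‖y‖^2)) := by
    rw [eq_div_iff (mul_ne_zero (by positivity) hw.ne')]
    linarith [hmaster]
  rw [hX2eq]
  have hy0 : (y 0)^2 = ‖y‖^2 - (y 1)^2 - (y 2)^2 := by linarith [hr2]
  rw [hy0]
  have hπ : π ≠ 0 := Real.pi_ne_zero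
  field_simp
  ring
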